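/- Let R be a commutative ring and g ≥ 0. The group Aut(X^{#2g+1}) of R-linear automorphisms of R^{2g+1} preserving λ_{2g+1} and ∂_{2g+1} is isomorphic, as a group, to the symplectic group Sp_{2g}(R). -/
import Mathlib


/-- The bilinear form of the formed space with boundary `X^{#n}`. -/
def lamX (R : Type) [CommRing R] (n : ℕ) (x y : Fin n → R) : R :=
  ∑ i : Fin n, ∑ j : Fin n, (if (i : ℕ) < (j : ℕ) then x i * y j
    else if (j : ℕ) < (i : ℕ) then -(x i * y j) else 0)

/-- The boundary map of `X^{#n}`. -/
def bdX (R : Type) [CommRing R] (n : ℕ) (x : Fin n → R) : R := ∑ i, x i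

/-- The standard symplectic form on `R^n` (interleaved hyperbolic pairs), i.e. the form of the
hyperbolic formed space `H^{⊕ g}` when `n = 2g`. -/
def omegaH (R : Type) [CommRing R] (n : ℕ) (x y : Fin n → R) : R :=
  ∑ i : Fin n, ∑ j : Fin n, (if (i : ℕ) % 2 = 0 ∧ (j : ℕ) = (i : ℕ) + 1 then x i * y j
    else if (j : ℕ) % 2 = 0 ∧ (i : ℕ) = (j : ℕ) + 1 then -(x i * y j) else 0)

/-- The symplectic group `Sp_n(R)`, as the subgroup of linear automorphisms of `R^n`
preserving the standard symplectic form. -/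
def SpGrp (R : Type) [CommRing R] (n : ℕ) : Subgroup ((Fin n → R) ≃ₗ[R] (Fin n → R)) where
  carrier := {A | ∀ x y, omegaH R n (A x) (A y) = omegaH R n x y}
  one_mem' := by intro x y; rfl
  mul_mem' := by
    intro a b ha hb x y
    show omegaH R n (a (b x)) (a (b y)) = omegaH R n x y
    rw [ha, hb]
  inv_mem' := by
    intro a ha x y
    show omegaH R n (a.symm x) (a.symm y) = omegaH R n x y
    conv_rhs => rw [← a.apply_symm_apply x, ← a.apply_symm_apply y]
    exact (ha _ _).symm

/-- The automorphism group of the formed space with boundary `X^{#n}`, as the subgroup of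
linear automorphisms of `R^n` preserving `λ_n` and `∂_n`. -/
def AutX (R : Type) [CommRing R] (n : ℕ) : Subgroup ((Fin n → R) ≃ₗ[R] (Fin n → R)) where
  carrier := {A | (∀ x y, lamX R n (A x) (A y) = lamX R n x y) ∧
    ∀ x, bdX R n (A x) = bdX R n x}
  one_mem' := ⟨fun _ _ => rfl, fun _ => rfl⟩
  mul_mem' := by
    intro a b ha hb
    refine ⟨fun x y => ?_, fun x => ?_⟩
    · show lamX R n (a (b x)) (a (b y)) = lamX R n x y
      rw [ha.1, hb.1]
    · show bdX R n (a (b x)) = bdX R n x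
      rw [ha.2, hb.2]
  inv_mem' := by
    intro a ha
    refine ⟨fun x y => ?_, fun x => ?_⟩
    · show lamX R n (a.symm x) (a.symm y) = lamX R n x y
      conv_rhs => rw [← a.apply_symm_apply x, ← a.apply_symm_apply y]
      exact (ha.1 _ _).symm
    · show bdX R n (a.symm x) = bdX R n x
      conv_rhs => rw [← a.apply_symm_apply x]
      exact (ha.2 _).symm



namespace AutXP
open Finset
variable (R : Type) [CommRing R]



def cc (i p : ℕ) : R :=
  if i % 2 = 0 then (if p = i then 1 else if p = i + 1 then -1 else 0)
  else (if i ≤ p then (-1) ^ (p + 1) else 0)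

def dd (i p : ℕ) : R :=
  if i % 2 = 0 then (if i < p then -1 else 0)
  else (if p = i ∨ p + 1 = i then 1 else 0)

def ee (p q : ℕ) : R := if p < q then 1 else if q < p then -1 else 0

def ww (i j : ℕ) : R :=
  if i % 2 = 0 ∧ j = i + 1 then 1 else if j % 2 = 0 ∧ i = j + 1 then -1 else 0

lemma npow (n : ℕ) : ((-1 : R)) ^ n = if n % 2 = 0 then 1 else -1 := by
  rcases Nat.even_or_odd n with h | h
  · rw [h.neg_one_pow, if_pos (Nat.even_iff.mp h)]
  · rw [h.neg_one_pow, if_neg]; simp [Nat.odd_iff.mp h]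

lemma sum_ite_ge (N a : ℕ) (f : ℕ → R) :
    ∑ p ∈ range N, (if a ≤ p then f p else 0) = ∑ p ∈ Ico a N, f p := by
  rw [← Finset.sum_filter]
  congr 1; ext p
  simp only [mem_filter, mem_range, mem_Ico]; tauto

lemma sum_ite_band (N a b : ℕ) (f : ℕ → R) (hb : b ≤ N) :
    ∑ p ∈ range N, (if a ≤ p ∧ p < b then f p else 0) = ∑ p ∈ Ico a b, f p := by
  rw [← Finset.sum_filter]
  congr 1; ext p
  simp only [mem_filter, mem_range, mem_Ico]; omega

lemma sum_delta (N t : ℕ) (h : t < N) (f : ℕ → R) :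
    ∑ p ∈ range N, (if p = t then f p else 0) = f t := by
  rw [Finset.sum_ite_eq' (range N) t f, if_pos (mem_range.mpr h)]

lemma alt_Ico (a b : ℕ) :
    ∑ p ∈ Ico a b, (-1:R)^p = if a < b ∧ ¬ a % 2 = b % 2 then (-1)^a else 0 := by
  induction b with
  | zero => simp
  | succ b ih =>
    by_cases hab : a ≤ b
    · rw [Finset.sum_Ico_succ_top hab, ih, npow, npow]
      split_ifs <;> (try omega) <;> ring
    · rw [Finset.Ico_eq_empty (by omega), Finset.sum_empty, if_neg (by omega)]

lemma I7 (g : ℕ) : ∑ p ∈ range (2*g+1), (-1:R)^p = 1 := by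
  rw [Finset.range_eq_Ico, alt_Ico, if_pos (by omega)]
  exact pow_zero _

lemma I4 (g i : ℕ) (hi : i < 2*g) : ∑ p ∈ range (2*g+1), cc R i p = 0 := by
  by_cases h : i % 2 = 0
  · have : ∀ p, cc R i p = (if p = i then (1:R) else 0) + (if p = i+1 then -1 else 0) := by
      intro p; simp only [cc, if_pos h]; split_ifs <;> first | omega | ring
    rw [Finset.sum_congr rfl fun p _ => this p, Finset.sum_add_distrib,
      sum_delta R _ _ (by omega), sum_delta R _ _ (by omega)]
    ring
  · have : ∀ p, cc R i p = (if i ≤ p then ((-1:R))^p * (-1) else 0) := by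
      intro p; simp only [cc, if_neg h, pow_succ]
    rw [Finset.sum_congr rfl fun p _ => this p, sum_ite_ge, ← Finset.sum_mul, alt_Ico,
      if_neg (by omega)]
    ring

lemma I6 (g i : ℕ) (hi : i < 2*g) : ∑ p ∈ range (2*g+1), dd R i p * (-1:R)^p = 0 := by
  by_cases h : i % 2 = 0
  · have : ∀ p, dd R i p * (-1:R)^p = (if i+1 ≤ p then ((-1:R))^p * (-1) else 0) := by
      intro p; simp only [dd, if_pos h]; split_ifs <;> first | omega | ring
    rw [Finset.sum_congr rfl fun p _ => this p, sum_ite_ge, ← Finset.sum_mul, alt_Ico,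
      if_neg (by omega)]
    ring
  · have : ∀ p, dd R i p * (-1:R)^p =
        (if p = i then ((-1:R))^p else 0) + (if p = i-1 then ((-1:R))^p else 0) := by
      intro p; simp only [dd, if_neg h]; split_ifs <;> first | omega | ring
    rw [Finset.sum_congr rfl fun p _ => this p, Finset.sum_add_distrib,
      sum_delta R _ _ (by omega), sum_delta R _ _ (by omega), npow, npow]
    split_ifs <;> first | omega | ring

lemma I5 (g q : ℕ) (hq : q < 2*g+1) :
    ∑ p ∈ range (2*g+1), (-1:R)^p * ee R p q = 0 := by
  have : ∀ p, (-1:R)^p * ee R p q =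
      (if 0 ≤ p ∧ p < q then ((-1:R))^p else 0) + (if q+1 ≤ p then ((-1:R))^p * (-1) else 0) := by
    intro p; simp only [ee]; split_ifs <;> first | omega | ring
  rw [Finset.sum_congr rfl fun p _ => this p, Finset.sum_add_distrib,
    sum_ite_band R _ _ _ _ (by omega), sum_ite_ge, ← Finset.sum_mul, alt_Ico, alt_Ico,
    npow, npow]
  split_ifs <;> first | omega | ring

lemma I1 (g i j : ℕ) (hi : i < 2*g) (hj : j < 2*g) :
    ∑ p ∈ range (2*g+1), dd R i p * cc R j p = if i = j then 1 else 0 := by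
  by_cases hje : j % 2 = 0
  · have : ∀ p, dd R i p * cc R j p =
        (if p = j then dd R i p else 0) + (if p = j+1 then -(dd R i p) else 0) := by
      intro p; simp only [cc, if_pos hje]; split_ifs <;> first | omega | ring
    rw [Finset.sum_congr rfl fun p _ => this p, Finset.sum_add_distrib,
      sum_delta R _ _ (by omega), sum_delta R _ _ (by omega)]
    simp only [dd]
    split_ifs <;> first | omega | ring
  · by_cases hie : i % 2 = 0
    · by_cases hij : j ≤ i
      · have : ∀ p, dd R i p * cc R j p = (if i+1 ≤ p then ((-1:R))^p else 0) := by
          intro p; simp only [dd, cc, if_pos hie, if_neg hje, pow_succ]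
          split_ifs <;> first | omega | ring
        rw [Finset.sum_congr rfl fun p _ => this p, sum_ite_ge, alt_Ico,
          if_neg (by omega), if_neg (by omega)]
      · have : ∀ p, dd R i p * cc R j p = (if j ≤ p then ((-1:R))^p else 0) := by
          intro p; simp only [dd, cc, if_pos hie, if_neg hje, pow_succ]
          split_ifs <;> first | omega | ring
        rw [Finset.sum_congr rfl fun p _ => this p, sum_ite_ge, alt_Ico,
          if_neg (by omega), if_neg (by omega)]
    · have : ∀ p, dd R i p * cc R j p =
          (if p = i then (if j ≤ p then ((-1:R))^(p+1) else 0) else 0)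
          + (if p = i-1 then (if j ≤ p then ((-1:R))^(p+1) else 0) else 0) := by
        intro p; simp only [dd, cc, if_neg hie, if_neg hje]
        split_ifs <;> first | omega | ring
      rw [Finset.sum_congr rfl fun p _ => this p, Finset.sum_add_distrib,
        sum_delta R _ _ (by omega), sum_delta R _ _ (by omega), npow, npow]
      split_ifs <;> first | omega | ring



lemma sum_range_pair (g : ℕ) (f : ℕ → R) :
    ∑ i ∈ range (2*g), f i = ∑ k ∈ range g, (f (2*k) + f (2*k+1)) := by
  induction g with
  | zero => simp
  | succ g ih =>
    have h2 : 2*(g+1) = (2*g+1)+1 := by ring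
    rw [h2, Finset.sum_range_succ, Finset.sum_range_succ, ih, Finset.sum_range_succ]
    ring

lemma sum_delta_even (g p : ℕ) (f : ℕ → R) :
    ∑ k ∈ range g, (if p = 2*k then f k else 0) =
      if p % 2 = 0 ∧ p < 2*g then f (p/2) else 0 := by
  by_cases h : p % 2 = 0 ∧ p < 2*g
  · rw [if_pos h]
    rw [Finset.sum_eq_single_of_mem (p/2) (mem_range.mpr (by omega))
      (fun b _ hb => by rw [if_neg (by omega)])]
    rw [if_pos (by omega)]
  · rw [if_neg h]
    exact Finset.sum_eq_zero fun k hk => by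
      rw [if_neg]; have := mem_range.mp hk; omega

lemma sum_delta_odd (g p : ℕ) (f : ℕ → R) :
    ∑ k ∈ range g, (if p = 2*k+1 then f k else 0) =
      if p % 2 = 1 ∧ p < 2*g then f (p/2) else 0 := by
  by_cases h : p % 2 = 1 ∧ p < 2*g
  · rw [if_pos h]
    rw [Finset.sum_eq_single_of_mem (p/2) (mem_range.mpr (by omega))
      (fun b _ hb => by rw [if_neg (by omega)])]
    rw [if_pos (by omega)]
  · rw [if_neg h]
    exact Finset.sum_eq_zero fun k hk => by
      rw [if_neg]; have := mem_range.mp hk; omega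

lemma sum_delta_half (g q : ℕ) (f : ℕ → R) :
    ∑ k ∈ range g, (if q = 2*k ∨ q = 2*k+1 then f k else 0) =
      if q < 2*g then f (q/2) else 0 := by
  by_cases h : q < 2*g
  · rw [if_pos h]
    rw [Finset.sum_eq_single_of_mem (q/2) (mem_range.mpr (by omega))
      (fun b _ hb => by rw [if_neg (by omega)])]
    rw [if_pos (by omega)]
  · rw [if_neg h]
    exact Finset.sum_eq_zero fun k hk => by
      rw [if_neg]; have := mem_range.mp hk; omega

lemma I2 (g p q : ℕ) (hp : p < 2*g+1) (hq : q < 2*g+1) :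
    ∑ i ∈ range (2*g), cc R i p * dd R i q = (if p = q then 1 else 0) - (-1:R)^p := by
  rw [sum_range_pair]
  have step : ∀ k, cc R (2*k) p * dd R (2*k) q + cc R (2*k+1) p * dd R (2*k+1) q =
      ((if p = 2*k then (if 2*k < q then (-1:R) else 0) else 0)
        + (if p = 2*k+1 then (if 2*k < q then (1:R) else 0) else 0))
      + (if q = 2*k ∨ q = 2*k+1 then (if 2*k+1 ≤ p then ((-1:R))^(p+1) else 0) else 0) := by
    intro k
    have h1 : (2*k) % 2 = 0 := by omega
    have h2 : ¬ (2*k+1) % 2 = 0 := by omega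
    simp only [cc, dd, if_pos h1, if_neg h2]
    split_ifs <;> first | omega | ring
  rw [Finset.sum_congr rfl fun k _ => step k]
  rw [Finset.sum_add_distrib, Finset.sum_add_distrib,
    sum_delta_even, sum_delta_odd, sum_delta_half, npow, npow]
  split_ifs <;> first | omega | ring

-- inner part of I3
lemma inner3 (g j p : ℕ) (hj : j < 2*g) (hp : p < 2*g+1) :
    ∑ q ∈ range (2*g+1), cc R j q * ee R p q =
      if (j % 2 = 0 ∧ (p = j ∨ p = j+1)) ∨ (¬ j % 2 = 0 ∧ j ≤ p) then -1 else 0 := by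
  by_cases hje : j % 2 = 0
  · have step : ∀ q, cc R j q * ee R p q =
        (if q = j then ee R p q else 0) + (if q = j+1 then -(ee R p q) else 0) := by
      intro q; simp only [cc, if_pos hje]; split_ifs <;> first | omega | ring
    rw [Finset.sum_congr rfl fun q _ => step q, Finset.sum_add_distrib,
      sum_delta R _ _ (by omega), sum_delta R _ _ (by omega)]
    simp only [ee]
    split_ifs <;> first | omega | ring
  · have step : ∀ q, cc R j q * ee R p q =
        (if (max j (p+1)) ≤ q then ((-1:R))^q * (-1) else 0)
        + (if j ≤ q ∧ q < p then ((-1:R))^q else 0) := by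
      intro q; simp only [cc, ee, if_neg hje, pow_succ]
      rcases le_or_gt j p with h | h <;>
        split_ifs <;> first | omega | ring
    rw [Finset.sum_congr rfl fun q _ => step q, Finset.sum_add_distrib,
      sum_ite_ge, sum_ite_band R _ _ _ _ (by omega), ← Finset.sum_mul,
      alt_Ico, alt_Ico, npow, npow]
    rcases le_or_gt j p with h | h <;>
      split_ifs <;> first | omega | ring

lemma I3 (g i j : ℕ) (hi : i < 2*g) (hj : j < 2*g) :
    ∑ p ∈ range (2*g+1), cc R i p * (∑ q ∈ range (2*g+1), cc R j q * ee R p q) =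
      ww R i j := by
  rw [Finset.sum_congr rfl fun p hp => by
    rw [inner3 R g j p hj (mem_range.mp hp)]]
  by_cases hie : i % 2 = 0
  · have step : ∀ p, cc R i p *
        (if (j % 2 = 0 ∧ (p = j ∨ p = j+1)) ∨ (¬ j % 2 = 0 ∧ j ≤ p) then (-1:R) else 0) =
        (if p = i then (if (j % 2 = 0 ∧ (i = j ∨ i = j+1)) ∨ (¬ j % 2 = 0 ∧ j ≤ i) then (-1:R) else 0) else 0)
        + (if p = i+1 then (if (j % 2 = 0 ∧ (i+1 = j ∨ i+1 = j+1)) ∨ (¬ j % 2 = 0 ∧ j ≤ i+1) then (1:R) else 0) else 0) := by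
      intro p; simp only [cc, if_pos hie]
      split_ifs <;> first | omega | ring
    rw [Finset.sum_congr rfl fun p _ => step p, Finset.sum_add_distrib,
      sum_delta R _ _ (by omega), sum_delta R _ _ (by omega)]
    simp only [ww]
    split_ifs <;> first | omega | ring
  · by_cases hje : j % 2 = 0
    · have step : ∀ p, cc R i p *
          (if (j % 2 = 0 ∧ (p = j ∨ p = j+1)) ∨ (¬ j % 2 = 0 ∧ j ≤ p) then (-1:R) else 0) =
          (if p = j then (if i ≤ j then (1:R) else 0) else 0)
          + (if p = j+1 then (if i ≤ j+1 then (-1:R) else 0) else 0) := by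
        intro p; simp only [cc, if_neg hie, npow]
        split_ifs <;> first | omega | ring
      rw [Finset.sum_congr rfl fun p _ => step p, Finset.sum_add_distrib,
        sum_delta R _ _ (by omega), sum_delta R _ _ (by omega)]
      simp only [ww]
      split_ifs <;> first | omega | ring
    · have step : ∀ p, cc R i p *
          (if (j % 2 = 0 ∧ (p = j ∨ p = j+1)) ∨ (¬ j % 2 = 0 ∧ j ≤ p) then (-1:R) else 0) =
          (if (max i j) ≤ p then ((-1:R))^p else 0) := by
        intro p; simp only [cc, if_neg hie, pow_succ]
        split_ifs <;> first | omega | ring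
      rw [Finset.sum_congr rfl fun p _ => step p, sum_ite_ge, alt_Ico,
        if_neg (by omega)]
      simp only [ww]
      split_ifs <;> first | omega | ring


def Phi (g : ℕ) : (Fin (2*g) → R) →ₗ[R] (Fin (2*g+1) → R) where
  toFun x := fun p => ∑ i : Fin (2*g), cc R i p * x i
  map_add' x y := by
    funext p
    simp only [Pi.add_apply, mul_add, Finset.sum_add_distrib]
  map_smul' r x := by
    funext p
    simp only [Pi.smul_apply, smul_eq_mul, RingHom.id_apply, Finset.mul_sum]
    exact Finset.sum_congr rfl fun i _ => by ring

def Psi (g : ℕ) : (Fin (2*g+1) → R) →ₗ[R] (Fin (2*g) → R) where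
  toFun y := fun i => ∑ p : Fin (2*g+1), dd R i p * y p
  map_add' x y := by
    funext i
    simp only [Pi.add_apply, mul_add, Finset.sum_add_distrib]
  map_smul' r x := by
    funext i
    simp only [Pi.smul_apply, smul_eq_mul, RingHom.id_apply, Finset.mul_sum]
    exact Finset.sum_congr rfl fun p _ => by ring

def uv (g : ℕ) : Fin (2*g+1) → R := fun p => (-1)^(p:ℕ)

lemma Phi_apply (g : ℕ) (x : Fin (2*g) → R) (p : Fin (2*g+1)) :
    Phi R g x p = ∑ i : Fin (2*g), cc R i p * x i := rfl
lemma Psi_apply (g : ℕ) (y : Fin (2*g+1) → R) (i : Fin (2*g)) :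
    Psi R g y i = ∑ p : Fin (2*g+1), dd R i p * y p := rfl

lemma lamX_eq (n : ℕ) (x y : Fin n → R) :
    lamX R n x y = ∑ i : Fin n, ∑ j : Fin n, x i * y j * ee R i j := by
  refine Finset.sum_congr rfl fun i _ => Finset.sum_congr rfl fun j _ => ?_
  simp only [ee]; split_ifs <;> ring

lemma omegaH_eq (n : ℕ) (x y : Fin n → R) :
    omegaH R n x y = ∑ i : Fin n, ∑ j : Fin n, x i * y j * ww R i j := by
  refine Finset.sum_congr rfl fun i _ => Finset.sum_congr rfl fun j _ => ?_
  simp only [ww]; split_ifs <;> ring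

lemma ee_anti (p q : ℕ) : ee R p q = -(ee R q p) := by
  simp only [ee]; split_ifs <;> first | omega | ring

-- V1
lemma V1 (g : ℕ) (x : Fin (2*g) → R) : Psi R g (Phi R g x) = x := by
  funext i
  rw [Psi_apply]
  calc ∑ p : Fin (2*g+1), dd R i p * Phi R g x p
      = ∑ p : Fin (2*g+1), ∑ j : Fin (2*g), dd R i p * (cc R j p * x j) := by
        refine Finset.sum_congr rfl fun p _ => ?_
        rw [Phi_apply, Finset.mul_sum]
    _ = ∑ j : Fin (2*g), ∑ p : Fin (2*g+1), dd R i p * (cc R j p * x j) := Finset.sum_comm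
    _ = ∑ j : Fin (2*g), (∑ p : Fin (2*g+1), dd R i p * cc R j p) * x j := by
        refine Finset.sum_congr rfl fun j _ => ?_
        rw [Finset.sum_mul]
        exact Finset.sum_congr rfl fun p _ => by ring
    _ = ∑ j : Fin (2*g), (if (i:ℕ) = (j:ℕ) then (1:R) else 0) * x j := by
        refine Finset.sum_congr rfl fun j _ => ?_
        rw [Fin.sum_univ_eq_sum_range (fun p => dd R (i:ℕ) p * cc R (j:ℕ) p) (2*g+1),
          I1 R g i j i.isLt j.isLt]
    _ = ∑ j : Fin (2*g), (if j = i then x j else 0) := by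
        refine Finset.sum_congr rfl fun j _ => ?_
        by_cases h : j = i
        · rw [if_pos h, if_pos (by rw [h]), one_mul]
        · rw [if_neg h, if_neg (fun hc => h (Fin.ext hc.symm)), zero_mul]
    _ = x i := by rw [Finset.sum_ite_eq' univ i x, if_pos (mem_univ i)]

-- V2
lemma V2 (g : ℕ) (y : Fin (2*g+1) → R) :
    Phi R g (Psi R g y) = y - (bdX R (2*g+1) y) • uv R g := by
  funext p
  rw [Phi_apply]
  calc ∑ i : Fin (2*g), cc R i p * Psi R g y i
      = ∑ i : Fin (2*g), ∑ q : Fin (2*g+1), cc R i p * (dd R i q * y q) := by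
        refine Finset.sum_congr rfl fun i _ => ?_
        rw [Psi_apply, Finset.mul_sum]
    _ = ∑ q : Fin (2*g+1), ∑ i : Fin (2*g), cc R i p * (dd R i q * y q) := Finset.sum_comm
    _ = ∑ q : Fin (2*g+1), (∑ i : Fin (2*g), cc R i p * dd R i q) * y q := by
        refine Finset.sum_congr rfl fun q _ => ?_
        rw [Finset.sum_mul]
        exact Finset.sum_congr rfl fun i _ => by ring
    _ = ∑ q : Fin (2*g+1), ((if (p:ℕ) = (q:ℕ) then (1:R) else 0) - (-1)^(p:ℕ)) * y q := by
        refine Finset.sum_congr rfl fun q _ => ?_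
        rw [Fin.sum_univ_eq_sum_range (fun i => cc R i (p:ℕ) * dd R i (q:ℕ)) (2*g),
          I2 R g p q p.isLt q.isLt]
    _ = (∑ q : Fin (2*g+1), (if q = p then y q else 0))
          - (-1)^(p:ℕ) * ∑ q : Fin (2*g+1), y q := by
        rw [Finset.mul_sum, ← Finset.sum_sub_distrib]
        refine Finset.sum_congr rfl fun q _ => ?_
        by_cases h : q = p
        · rw [if_pos h, if_pos (by rw [h]), sub_mul, one_mul]
        · rw [if_neg h, if_neg (fun hc => h (Fin.ext hc.symm)), sub_mul, zero_mul]
    _ = y p - (bdX R (2*g+1) y) • uv R g p := by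
        rw [Finset.sum_ite_eq' univ p y, if_pos (mem_univ p)]
        simp only [bdX, uv, smul_eq_mul]
        ring
    _ = (y - (bdX R (2*g+1) y) • uv R g) p := by
        simp only [Pi.sub_apply, Pi.smul_apply]

-- V4
lemma V4 (g : ℕ) (x : Fin (2*g) → R) : bdX R (2*g+1) (Phi R g x) = 0 := by
  rw [bdX]
  calc ∑ p : Fin (2*g+1), Phi R g x p
      = ∑ p : Fin (2*g+1), ∑ i : Fin (2*g), cc R i p * x i := rfl
    _ = ∑ i : Fin (2*g), ∑ p : Fin (2*g+1), cc R i p * x i := Finset.sum_comm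
    _ = ∑ i : Fin (2*g), (∑ p : Fin (2*g+1), cc R i p) * x i := by
        refine Finset.sum_congr rfl fun i _ => ?_
        rw [Finset.sum_mul]
    _ = 0 := by
        refine Finset.sum_eq_zero fun i _ => ?_
        rw [Fin.sum_univ_eq_sum_range (fun p => cc R (i:ℕ) p) (2*g+1), I4 R g i i.isLt, zero_mul]

-- V5
lemma V5a (g : ℕ) (y : Fin (2*g+1) → R) : lamX R (2*g+1) (uv R g) y = 0 := by
  rw [lamX_eq]
  calc ∑ p : Fin (2*g+1), ∑ q : Fin (2*g+1), uv R g p * y q * ee R p q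
      = ∑ q : Fin (2*g+1), ∑ p : Fin (2*g+1), uv R g p * y q * ee R p q := Finset.sum_comm
    _ = ∑ q : Fin (2*g+1), (∑ p : Fin (2*g+1), (-1:R)^(p:ℕ) * ee R p q) * y q := by
        refine Finset.sum_congr rfl fun q _ => ?_
        rw [Finset.sum_mul]
        exact Finset.sum_congr rfl fun p _ => by simp only [uv]; ring
    _ = 0 := by
        refine Finset.sum_eq_zero fun q _ => ?_
        rw [Fin.sum_univ_eq_sum_range (fun p => (-1:R)^p * ee R p (q:ℕ)) (2*g+1),
          I5 R g q q.isLt, zero_mul]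

lemma V5b (g : ℕ) (y : Fin (2*g+1) → R) : lamX R (2*g+1) y (uv R g) = 0 := by
  rw [lamX_eq]
  calc ∑ p : Fin (2*g+1), ∑ q : Fin (2*g+1), y p * uv R g q * ee R p q
      = ∑ p : Fin (2*g+1), -((∑ q : Fin (2*g+1), (-1:R)^(q:ℕ) * ee R q p) * y p) := by
        refine Finset.sum_congr rfl fun p _ => ?_
        rw [Finset.sum_mul, ← Finset.sum_neg_distrib]
        refine Finset.sum_congr rfl fun q _ => ?_
        rw [ee_anti R (p:ℕ) (q:ℕ)]
        simp only [uv]; ring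
    _ = 0 := by
        refine Finset.sum_eq_zero fun p _ => ?_
        rw [Fin.sum_univ_eq_sum_range (fun q => (-1:R)^q * ee R q (p:ℕ)) (2*g+1),
          I5 R g p p.isLt, zero_mul, neg_zero]

-- V6
lemma V6 (g : ℕ) : Psi R g (uv R g) = 0 := by
  funext i
  rw [Psi_apply]
  have : ∑ p : Fin (2*g+1), dd R i p * uv R g p
      = ∑ p ∈ range (2*g+1), dd R (i:ℕ) p * (-1:R)^p :=
    Fin.sum_univ_eq_sum_range (fun p => dd R (i:ℕ) p * (-1:R)^p) (2*g+1)
  rw [this, I6 R g i i.isLt]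
  rfl

-- V3
lemma V3 (g : ℕ) (x y : Fin (2*g) → R) :
    lamX R (2*g+1) (Phi R g x) (Phi R g y) = omegaH R (2*g) x y := by
  rw [lamX_eq, omegaH_eq]
  calc ∑ p : Fin (2*g+1), ∑ q : Fin (2*g+1), Phi R g x p * Phi R g y q * ee R p q
      = ∑ p : Fin (2*g+1), ∑ q : Fin (2*g+1), ∑ i : Fin (2*g), ∑ j : Fin (2*g),
          (cc R i p * x i) * ((cc R j q * y j) * ee R p q) := by
        refine Finset.sum_congr rfl fun p _ => Finset.sum_congr rfl fun q _ => ?_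
        rw [Phi_apply, Phi_apply, Finset.sum_mul_sum, Finset.sum_mul]
        refine Finset.sum_congr rfl fun i _ => ?_
        rw [Finset.sum_mul]
        exact Finset.sum_congr rfl fun j _ => by ring
    _ = ∑ p : Fin (2*g+1), ∑ i : Fin (2*g), ∑ q : Fin (2*g+1), ∑ j : Fin (2*g),
          (cc R i p * x i) * ((cc R j q * y j) * ee R p q) := by
        exact Finset.sum_congr rfl fun p _ => Finset.sum_comm
    _ = ∑ i : Fin (2*g), ∑ p : Fin (2*g+1), ∑ q : Fin (2*g+1), ∑ j : Fin (2*g),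
          (cc R i p * x i) * ((cc R j q * y j) * ee R p q) := Finset.sum_comm
    _ = ∑ i : Fin (2*g), ∑ p : Fin (2*g+1), ∑ j : Fin (2*g), ∑ q : Fin (2*g+1),
          (cc R i p * x i) * ((cc R j q * y j) * ee R p q) := by
        exact Finset.sum_congr rfl fun i _ => Finset.sum_congr rfl fun p _ => Finset.sum_comm
    _ = ∑ i : Fin (2*g), ∑ j : Fin (2*g), ∑ p : Fin (2*g+1), ∑ q : Fin (2*g+1),
          (cc R i p * x i) * ((cc R j q * y j) * ee R p q) := by
        exact Finset.sum_congr rfl fun i _ => Finset.sum_comm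
    _ = ∑ i : Fin (2*g), ∑ j : Fin (2*g), x i * y j *
          (∑ p : Fin (2*g+1), cc R i p * (∑ q : Fin (2*g+1), cc R j q * ee R p q)) := by
        refine Finset.sum_congr rfl fun i _ => Finset.sum_congr rfl fun j _ => ?_
        rw [Finset.mul_sum]
        refine Finset.sum_congr rfl fun p _ => ?_
        rw [Finset.mul_sum, Finset.mul_sum]
        exact Finset.sum_congr rfl fun q _ => by ring
    _ = ∑ i : Fin (2*g), ∑ j : Fin (2*g), x i * y j * ww R (i:ℕ) (j:ℕ) := by
        refine Finset.sum_congr rfl fun i _ => Finset.sum_congr rfl fun j _ => ?_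
        have hq : ∀ p : Fin (2*g+1), (∑ q : Fin (2*g+1), cc R (j:ℕ) (q:ℕ) * ee R (p:ℕ) (q:ℕ))
            = ∑ q ∈ range (2*g+1), cc R (j:ℕ) q * ee R (p:ℕ) q :=
          fun p => Fin.sum_univ_eq_sum_range (fun q => cc R (j:ℕ) q * ee R (p:ℕ) q) (2*g+1)
        simp only [hq]
        rw [Fin.sum_univ_eq_sum_range
          (fun p => cc R (i:ℕ) p * (∑ q ∈ range (2*g+1), cc R (j:ℕ) q * ee R p q)) (2*g+1),
          I3 R g i j i.isLt j.isLt]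


lemma lamX_add_left (n : ℕ) (x x' y : Fin n → R) :
    lamX R n (x + x') y = lamX R n x y + lamX R n x' y := by
  simp only [lamX_eq]
  rw [← Finset.sum_add_distrib]
  refine Finset.sum_congr rfl fun i _ => ?_
  rw [← Finset.sum_add_distrib]
  refine Finset.sum_congr rfl fun j _ => ?_
  simp only [Pi.add_apply]; ring

lemma lamX_add_right (n : ℕ) (x y y' : Fin n → R) :
    lamX R n x (y + y') = lamX R n x y + lamX R n x y' := by
  simp only [lamX_eq]
  rw [← Finset.sum_add_distrib]
  refine Finset.sum_congr rfl fun i _ => ?_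
  rw [← Finset.sum_add_distrib]
  refine Finset.sum_congr rfl fun j _ => ?_
  simp only [Pi.add_apply]; ring

lemma lamX_smul_left (n : ℕ) (c : R) (x y : Fin n → R) :
    lamX R n (c • x) y = c * lamX R n x y := by
  simp only [lamX_eq, Finset.mul_sum]
  refine Finset.sum_congr rfl fun i _ => Finset.sum_congr rfl fun j _ => ?_
  simp only [Pi.smul_apply, smul_eq_mul]; ring

lemma lamX_smul_right (n : ℕ) (c : R) (x y : Fin n → R) :
    lamX R n x (c • y) = c * lamX R n x y := by
  simp only [lamX_eq, Finset.mul_sum]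
  refine Finset.sum_congr rfl fun i _ => Finset.sum_congr rfl fun j _ => ?_
  simp only [Pi.smul_apply, smul_eq_mul]; ring

lemma bdX_add (n : ℕ) (x y : Fin n → R) : bdX R n (x + y) = bdX R n x + bdX R n y := by
  simp [bdX, Finset.sum_add_distrib]

lemma bdX_smul (n : ℕ) (c : R) (x : Fin n → R) : bdX R n (c • x) = c * bdX R n x := by
  simp [bdX, Finset.mul_sum]

lemma V7 (g : ℕ) : bdX R (2*g+1) (uv R g) = 1 := by
  rw [bdX]
  simp only [uv]
  exact (Fin.sum_univ_eq_sum_range (fun p => (-1:R)^p) (2*g+1)).trans (I7 R g)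

lemma V2' (g : ℕ) (y : Fin (2*g+1) → R) :
    Phi R g (Psi R g y) + (bdX R (2*g+1) y) • uv R g = y := by
  rw [V2]; exact sub_add_cancel _ _

lemma V8 (g : ℕ) (y y' : Fin (2*g+1) → R) :
    lamX R (2*g+1) y y' = omegaH R (2*g) (Psi R g y) (Psi R g y') := by
  conv_lhs => rw [← V2' R g y, ← V2' R g y']
  rw [lamX_add_left, lamX_smul_left, V5a, mul_zero, add_zero,
    lamX_add_right, lamX_smul_right, V5b, mul_zero, add_zero, V3]

lemma rad (g : ℕ) (x : Fin (2*g+1) → R) (h : ∀ y, lamX R (2*g+1) x y = 0) :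
    x = bdX R (2*g+1) x • uv R g := by
  have key : ∀ j : Fin (2*g+1), ∑ i : Fin (2*g+1), x i * ee R i j = 0 := by
    intro j
    have h2 := h (Pi.single j 1)
    rw [lamX_eq] at h2
    have expand : ∀ i : Fin (2*g+1),
        (∑ q : Fin (2*g+1), x i * (Pi.single j 1 : Fin (2*g+1) → R) q * ee R i q) = x i * ee R i j := by
      intro i
      have pt : ∀ q : Fin (2*g+1), x i * (Pi.single j 1 : Fin (2*g+1) → R) q * ee R i q
          = if q = j then x i * ee R (i:ℕ) (q:ℕ) else 0 := by
        intro q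
        rcases eq_or_ne q j with hq | hq
        · rw [if_pos hq, hq, Pi.single_eq_same, mul_one]
        · rw [if_neg hq, Pi.single_eq_of_ne hq, mul_zero, zero_mul]
      rw [Finset.sum_congr rfl fun q _ => pt q,
        Finset.sum_ite_eq' univ j (fun q => x i * ee R (i:ℕ) (q:ℕ)), if_pos (mem_univ j)]
    rw [Finset.sum_congr rfl fun i _ => expand i] at h2
    exact h2
  have key' : ∀ j : ℕ, j < 2*g+1 → (∑ i : Fin (2*g+1), x i * ee R (i:ℕ) j) = 0 :=
    fun j hj => key ⟨j, hj⟩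
  have step : ∀ (j : ℕ) (hj : j + 1 < 2*g+1),
      x ⟨j, by omega⟩ + x ⟨j+1, hj⟩ = 0 := by
    intro j hj
    have expand : (∑ i : Fin (2*g+1), x i * ee R (i:ℕ) (j+1))
        - (∑ i : Fin (2*g+1), x i * ee R (i:ℕ) j)
        = x ⟨j, by omega⟩ + x ⟨j+1, hj⟩ := by
      rw [← Finset.sum_sub_distrib]
      have pt : ∀ i : Fin (2*g+1), x i * ee R (i:ℕ) (j+1) - x i * ee R (i:ℕ) j
          = (if i = (⟨j, by omega⟩ : Fin (2*g+1)) then x i else 0)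
            + (if i = (⟨j+1, hj⟩ : Fin (2*g+1)) then x i else 0) := by
        intro i
        simp only [ee, Fin.ext_iff]
        split_ifs <;> first | omega | ring
      rw [Finset.sum_congr rfl fun i _ => pt i, Finset.sum_add_distrib,
        Finset.sum_ite_eq' univ _ x, Finset.sum_ite_eq' univ _ x,
        if_pos (mem_univ _), if_pos (mem_univ _)]
    rw [key' (j+1) hj, key' j (by omega)] at expand
    rw [← expand]; ring
  have alt : ∀ (p : ℕ) (hp : p < 2*g+1), x ⟨p, hp⟩ = (-1:R)^p * x ⟨0, by omega⟩ := by
    intro p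
    induction p with
    | zero => intro hp; rw [pow_zero, one_mul]
    | succ p ih =>
      intro hp
      have h1 := step p hp
      have h2 := ih (by omega)
      have h3 : x ⟨p+1, hp⟩ = - x ⟨p, by omega⟩ := eq_neg_of_add_eq_zero_right h1
      rw [h3, h2, pow_succ]; ring
  have hbd : bdX R (2*g+1) x = x ⟨0, by omega⟩ := by
    rw [bdX]
    calc ∑ i : Fin (2*g+1), x i
        = ∑ i : Fin (2*g+1), (-1:R)^(i:ℕ) * x ⟨0, by omega⟩ := by
          refine Finset.sum_congr rfl fun i _ => ?_
          conv_lhs => rw [← Fin.eta i i.isLt]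
          exact alt i i.isLt
      _ = (∑ i : Fin (2*g+1), (-1:R)^(i:ℕ)) * x ⟨0, by omega⟩ := by rw [Finset.sum_mul]
      _ = x ⟨0, by omega⟩ := by
          rw [Fin.sum_univ_eq_sum_range (fun p => (-1:R)^p) (2*g+1), I7, one_mul]
  funext p
  rw [Pi.smul_apply, smul_eq_mul, hbd]
  have h4 := alt p p.isLt
  conv_lhs => rw [← Fin.eta p p.isLt]
  rw [h4, uv]; ring

def bdl (n : ℕ) : (Fin n → R) →ₗ[R] R where
  toFun := bdX R n
  map_add' := bdX_add R n
  map_smul' c x := by simp only [RingHom.id_apply, smul_eq_mul]; exact bdX_smul R n c x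

lemma bdl_apply (n : ℕ) (y : Fin n → R) : bdl R n y = bdX R n y := rfl


lemma V9 (g : ℕ) (A : (Fin (2*g+1) → R) ≃ₗ[R] (Fin (2*g+1) → R))
    (hA : A ∈ AutX R (2*g+1)) : A (uv R g) = uv R g := by
  have h1 : ∀ y, lamX R (2*g+1) (A (uv R g)) y = 0 := by
    intro y
    have h2 := hA.1 (uv R g) (A.symm y)
    rw [A.apply_symm_apply, V5a] at h2
    exact h2
  have h3 := rad R g (A (uv R g)) h1
  have h4 : bdX R (2*g+1) (A (uv R g)) = 1 := by rw [hA.2 (uv R g), V7]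
  rw [h3, h4, one_smul]

def theIso (g : ℕ) : ↥(AutX R (2*g+1)) ≃* ↥(SpGrp R (2*g)) where
  toFun A := ⟨LinearEquiv.ofLinear
      (Psi R g ∘ₗ (A.1 : (Fin (2*g+1) → R) →ₗ[R] (Fin (2*g+1) → R)) ∘ₗ Phi R g)
      (Psi R g ∘ₗ (A.1.symm : (Fin (2*g+1) → R) →ₗ[R] (Fin (2*g+1) → R)) ∘ₗ Phi R g)
      (by
        have hsb : ∀ y, bdX R (2*g+1) (A.1.symm y) = bdX R (2*g+1) y := by
          intro y
          conv_rhs => rw [← A.1.apply_symm_apply y]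
          exact (A.2.2 (A.1.symm y)).symm
        apply LinearMap.ext; intro x
        simp only [LinearMap.coe_comp, Function.comp_apply, LinearEquiv.coe_coe,
          LinearMap.id_coe, id_eq]
        rw [V2 R g (A.1.symm (Phi R g x)), hsb, V4, zero_smul, sub_zero,
          A.1.apply_symm_apply, V1])
      (by
        apply LinearMap.ext; intro x
        simp only [LinearMap.coe_comp, Function.comp_apply, LinearEquiv.coe_coe,
          LinearMap.id_coe, id_eq]
        rw [V2 R g (A.1 (Phi R g x)), A.2.2, V4, zero_smul, sub_zero,
          A.1.symm_apply_apply, V1]),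
    by
      intro x y
      show omegaH R (2*g) (Psi R g (A.1 (Phi R g x))) (Psi R g (A.1 (Phi R g y)))
        = omegaH R (2*g) x y
      rw [← V8, A.2.1, V3]⟩
  invFun B := ⟨LinearEquiv.ofLinear
      (Phi R g ∘ₗ (B.1 : (Fin (2*g) → R) →ₗ[R] (Fin (2*g) → R)) ∘ₗ Psi R g
        + (bdl R (2*g+1)).smulRight (uv R g))
      (Phi R g ∘ₗ (B.1.symm : (Fin (2*g) → R) →ₗ[R] (Fin (2*g) → R)) ∘ₗ Psi R g
        + (bdl R (2*g+1)).smulRight (uv R g))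
      (by
        apply LinearMap.ext; intro y
        simp only [LinearMap.add_apply, LinearMap.coe_comp, Function.comp_apply,
          LinearMap.smulRight_apply, LinearEquiv.coe_coe, LinearMap.id_coe, id_eq,
          bdl_apply]
        rw [map_add (Psi R g), map_smul (Psi R g), V6, smul_zero, add_zero, V1,
          B.1.apply_symm_apply, bdX_add, bdX_smul, V4, V7, mul_one, zero_add, V2,
          sub_add_cancel])
      (by
        apply LinearMap.ext; intro y
        simp only [LinearMap.add_apply, LinearMap.coe_comp, Function.comp_apply,
          LinearMap.smulRight_apply, LinearEquiv.coe_coe, LinearMap.id_coe, id_eq,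
          bdl_apply]
        rw [map_add (Psi R g), map_smul (Psi R g), V6, smul_zero, add_zero, V1,
          B.1.symm_apply_apply, bdX_add, bdX_smul, V4, V7, mul_one, zero_add, V2,
          sub_add_cancel]),
    by
      constructor
      · intro x y
        show lamX R (2*g+1)
            (Phi R g (B.1 (Psi R g x)) + bdX R (2*g+1) x • uv R g)
            (Phi R g (B.1 (Psi R g y)) + bdX R (2*g+1) y • uv R g)
          = lamX R (2*g+1) x y
        rw [lamX_add_left, lamX_smul_left, V5a, mul_zero, add_zero,
          lamX_add_right, lamX_smul_right, V5b, mul_zero, add_zero, V3,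
          B.2 (Psi R g x) (Psi R g y), ← V8]
      · intro x
        show bdX R (2*g+1) (Phi R g (B.1 (Psi R g x)) + bdX R (2*g+1) x • uv R g)
          = bdX R (2*g+1) x
        rw [bdX_add, bdX_smul, V4, V7, mul_one, zero_add]⟩
  left_inv A := by
    refine Subtype.ext (LinearEquiv.ext fun y => ?_)
    show Phi R g ((Psi R g ∘ₗ (A.1 : (Fin (2*g+1) → R) →ₗ[R] (Fin (2*g+1) → R)) ∘ₗ Phi R g)
        (Psi R g y)) + bdX R (2*g+1) y • uv R g = A.1 y
    simp only [LinearMap.coe_comp, Function.comp_apply, LinearEquiv.coe_coe]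
    rw [V2 R g (A.1 (Phi R g (Psi R g y))), A.2.2, V4, zero_smul, sub_zero]
    conv_lhs => rw [V2 R g y]
    rw [map_sub, map_smul, V9 R g A.1 A.2]
    exact sub_add_cancel _ _
  right_inv B := by
    refine Subtype.ext (LinearEquiv.ext fun x => ?_)
    show Psi R g (Phi R g (B.1 (Psi R g (Phi R g x))) + bdX R (2*g+1) (Phi R g x) • uv R g)
      = B.1 x
    rw [V4, zero_smul, add_zero, V1, V1]
  map_mul' A A' := by
    refine Subtype.ext (LinearEquiv.ext fun x => ?_)
    show Psi R g (A.1 (A'.1 (Phi R g x)))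
      = Psi R g (A.1 (Phi R g (Psi R g (A'.1 (Phi R g x)))))
    rw [V2 R g (A'.1 (Phi R g x)), A'.2.2, V4, zero_smul, sub_zero]


end AutXP

/-- the automorphism group of `X^{#(2g+1)}` is isomorphic, as a group, to the
symplectic group `Sp_{2g}(R)`. -/
theorem autX_odd_iso_Sp (R : Type) [CommRing R] (g : ℕ) :
    Nonempty (↥(AutX R (2 * g + 1)) ≃* ↥(SpGrp R (2 * g))) := by
  exact ⟨AutXP.theIso R g⟩
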